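/- Lipschitz stability in the Euclidean case: Let μ, μ' ∈ P₂(ℝⁿ), ν, ν' ∈ P₂(ℝ^d) and A, A' ∈ H. Then |W₂(Aᵀ_#μ, ν) − W₂((A')ᵀ_#μ', ν')| ≤ c₀ ‖A − A'‖ + W₂(μ, μ') + W₂(ν, ν'), where c₀ := ( ∫_{ℝⁿ} ‖x‖² dμ(x) )^{1/2} and ‖A − A'‖ is the Frobenius norm. -/

import Mathlib

open MeasureTheory Matrix ProbabilityTheory
open scoped ENNReal NNReal

/-- The 2-Wasserstein distance between Borel probability measures on `ℝ^k`
(vectors as `Fin k → ℝ`, squared Euclidean cost). -/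
noncomputable def W2 {k : ℕ} (ρ σ : Measure (Fin k → ℝ)) : ℝ :=
  Real.sqrt (sInf { v : ℝ | ∃ π : Measure ((Fin k → ℝ) × (Fin k → ℝ)),
    π.map Prod.fst = ρ ∧ π.map Prod.snd = σ ∧
    v = ∫ p, ∑ i, (p.1 i - p.2 i) ^ 2 ∂π })

/-- The Frobenius norm of a real matrix. -/
noncomputable def frobNorm {m k : ℕ} (A : Matrix (Fin m) (Fin k) ℝ) : ℝ :=
  Real.sqrt (∑ i, ∑ j, (A i j) ^ 2)

namespace W2Aux

abbrev V (k : ℕ) := Fin k → ℝ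

variable {k : ℕ}

noncomputable def cost {k : ℕ} (p : V k × V k) : ℝ := ∑ i, (p.1 i - p.2 i) ^ 2

lemma cost_nonneg (p : V k × V k) : 0 ≤ cost p := Finset.sum_nonneg fun _ _ => sq_nonneg _

lemma cost_continuous : Continuous (cost (k := k)) := by unfold cost; fun_prop

def CSet (ρ σ : Measure (V k)) : Set ℝ :=
  { v : ℝ | ∃ π : Measure (V k × V k),
    π.map Prod.fst = ρ ∧ π.map Prod.snd = σ ∧ v = ∫ p, cost p ∂π }

lemma W2_eq (ρ σ : Measure (V k)) : W2 ρ σ = Real.sqrt (sInf (CSet ρ σ)) := rfl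

lemma CSet_bddBelow (ρ σ : Measure (V k)) : BddBelow (CSet ρ σ) :=
  ⟨0, fun _ ⟨_, _, _, hv⟩ => hv ▸ integral_nonneg cost_nonneg⟩

lemma CSet_nonempty (ρ σ : Measure (V k)) [IsProbabilityMeasure ρ] [IsProbabilityMeasure σ] :
    (CSet ρ σ).Nonempty :=
  ⟨∫ p, cost p ∂(ρ.prod σ), ρ.prod σ, by simp, by simp, rfl⟩

lemma sInf_CSet_nonneg (ρ σ : Measure (V k)) : 0 ≤ sInf (CSet ρ σ) :=
  Real.sInf_nonneg fun _ ⟨_, _, _, hv⟩ => hv ▸ integral_nonneg cost_nonneg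

lemma W2_nonneg (ρ σ : Measure (V k)) : 0 ≤ W2 ρ σ := Real.sqrt_nonneg _

lemma W2_sq (ρ σ : Measure (V k)) : W2 ρ σ ^ 2 = sInf (CSet ρ σ) := by
  rw [W2_eq, Real.sq_sqrt (sInf_CSet_nonneg ρ σ)]

lemma sqrt_add_le {a b : ℝ} (ha : 0 ≤ a) (hb : 0 ≤ b) :
    Real.sqrt (a + b) ≤ Real.sqrt a + Real.sqrt b := by
  have h1 := Real.sq_sqrt ha
  have h2 := Real.sq_sqrt hb
  have h3 := Real.sqrt_nonneg a
  have h4 := Real.sqrt_nonneg b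
  have h : a + b ≤ (Real.sqrt a + Real.sqrt b) ^ 2 := by nlinarith [mul_nonneg h3 h4]
  calc Real.sqrt (a + b) ≤ Real.sqrt ((Real.sqrt a + Real.sqrt b) ^ 2) := Real.sqrt_le_sqrt h
    _ = Real.sqrt a + Real.sqrt b := Real.sqrt_sq (by positivity)

lemma W2_le_sqrt_integral {ρ σ : Measure (V k)} {π : Measure (V k × V k)}
    (h1 : π.map Prod.fst = ρ) (h2 : π.map Prod.snd = σ) :
    W2 ρ σ ≤ Real.sqrt (∫ p, cost p ∂π) := by
  rw [W2_eq]
  exact Real.sqrt_le_sqrt (csInf_le (CSet_bddBelow ρ σ) ⟨π, h1, h2, rfl⟩)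

lemma isProbabilityMeasure_of_coupling {ρ : Measure (V k)} {π : Measure (V k × V k)}
    [IsProbabilityMeasure ρ] (h1 : π.map Prod.fst = ρ) :
    IsProbabilityMeasure π := by
  constructor
  have h : (π.map Prod.fst) Set.univ = 1 := by rw [h1]; exact measure_univ
  rwa [Measure.map_apply measurable_fst MeasurableSet.univ, Set.preimage_univ] at h

lemma exists_coupling (ρ σ : Measure (V k)) [IsProbabilityMeasure ρ] [IsProbabilityMeasure σ]
    {ε : ℝ} (hε : 0 < ε) :
    ∃ π : Measure (V k × V k), π.map Prod.fst = ρ ∧ π.map Prod.snd = σ ∧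
      ∫ p, cost p ∂π < W2 ρ σ ^ 2 + ε := by
  obtain ⟨v, ⟨π, h1, h2, hv⟩, hlt⟩ := Real.lt_sInf_add_pos (CSet_nonempty ρ σ) hε
  exact ⟨π, h1, h2, by rw [← hv, W2_sq]; exact hlt⟩

/-- transfer of second moments through a measurable projection -/
lemma secondMom_proj {α : Type*} [MeasurableSpace α] {π : Measure α} {T : α → V k}
    (hT : Measurable T) {ρ : Measure (V k)} (hmap : π.map T = ρ)
    (hρ : Integrable (fun x : V k => ∑ i, (x i) ^ 2) ρ) :
    Integrable (fun a => ∑ i, (T a i) ^ 2) π := by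
  have hm : AEStronglyMeasurable (fun x : V k => ∑ i, (x i) ^ 2) (π.map T) := by
    apply Measurable.aestronglyMeasurable; fun_prop
  exact (integrable_map_measure hm hT.aemeasurable).1 (by rwa [hmap])

lemma integrable_cost {ρ σ : Measure (V k)} {π : Measure (V k × V k)}
    (h1 : π.map Prod.fst = ρ) (h2 : π.map Prod.snd = σ)
    (hρ : Integrable (fun x : V k => ∑ i, (x i) ^ 2) ρ)
    (hσ : Integrable (fun x : V k => ∑ i, (x i) ^ 2) σ) :
    Integrable cost π := by
  have hb1 := secondMom_proj measurable_fst h1 hρ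
  have hb2 := secondMom_proj measurable_snd h2 hσ
  refine Integrable.mono' (((hb1.const_mul 2).add (hb2.const_mul 2)))
    cost_continuous.aestronglyMeasurable
    (Filter.Eventually.of_forall fun p => ?_)
  rw [Real.norm_of_nonneg (cost_nonneg p)]
  unfold cost
  simp only [Pi.add_apply]
  rw [Finset.mul_sum, Finset.mul_sum, ← Finset.sum_add_distrib]
  exact Finset.sum_le_sum fun i _ => by nlinarith [sq_nonneg (p.1 i + p.2 i)]

lemma integrable_cost_proj {α : Type*} [MeasurableSpace α] {π : Measure α}
    {T : α → V k × V k} (hT : Measurable T) {π' : Measure (V k × V k)}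
    (hmap : π.map T = π') (hint : Integrable cost π') :
    Integrable (fun a => cost (T a)) π := by
  have hm : AEStronglyMeasurable cost (π.map T) := cost_continuous.aestronglyMeasurable
  exact (integrable_map_measure hm hT.aemeasurable).1 (by rwa [hmap])

noncomputable def toE {k : ℕ} : V k → EuclideanSpace ℝ (Fin k) :=
  (EuclideanSpace.equiv (Fin k) ℝ).symm

lemma measurable_toE : Measurable (toE (k := k)) :=
  (EuclideanSpace.equiv (Fin k) ℝ).symm.continuous.measurable

lemma toE_apply (x : V k) (i : Fin k) : toE x i = x i := rfl

lemma norm_toE_sq (x : V k) : ‖toE x‖ ^ 2 = ∑ i, (x i) ^ 2 := by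
  rw [EuclideanSpace.norm_eq, Real.sq_sqrt (Finset.sum_nonneg fun _ _ => by positivity)]
  simp [toE_apply, Real.norm_eq_abs, sq_abs]

lemma toE_add (x y : V k) : toE (x + y) = toE x + toE y := rfl

lemma minkowski {α : Type*} [MeasurableSpace α] (μ : Measure α) (u v : α → V k)
    (hu : Measurable u) (hv : Measurable v)
    (hu2 : Integrable (fun a => ∑ i, (u a i) ^ 2) μ)
    (hv2 : Integrable (fun a => ∑ i, (v a i) ^ 2) μ) :
    Real.sqrt (∫ a, ∑ i, (u a i + v a i) ^ 2 ∂μ)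
      ≤ Real.sqrt (∫ a, ∑ i, (u a i) ^ 2 ∂μ) + Real.sqrt (∫ a, ∑ i, (v a i) ^ 2 ∂μ) := by
  set f : α → EuclideanSpace ℝ (Fin k) := fun a => toE (u a) with hf
  set g : α → EuclideanSpace ℝ (Fin k) := fun a => toE (v a) with hg
  have hfm : AEStronglyMeasurable f μ := (measurable_toE.comp hu).aestronglyMeasurable
  have hgm : AEStronglyMeasurable g μ := (measurable_toE.comp hv).aestronglyMeasurable
  have hfn : (fun a => ‖f a‖ ^ 2) = fun a => ∑ i, (u a i) ^ 2 := by
    funext a; exact norm_toE_sq (u a)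
  have hgn : (fun a => ‖g a‖ ^ 2) = fun a => ∑ i, (v a i) ^ 2 := by
    funext a; exact norm_toE_sq (v a)
  have hfgn : (fun a => ‖f a + g a‖ ^ 2) = fun a => ∑ i, (u a i + v a i) ^ 2 := by
    funext a; rw [← toE_add]; exact norm_toE_sq _
  have hfL : MemLp f 2 μ := (memLp_two_iff_integrable_sq_norm hfm).2 (by rwa [hfn])
  have hgL : MemLp g 2 μ := (memLp_two_iff_integrable_sq_norm hgm).2 (by rwa [hgn])
  have hfgL : MemLp (f + g) 2 μ := hfL.add hgL
  have conv : ∀ (h : α → EuclideanSpace ℝ (Fin k)), MemLp h 2 μ →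
      eLpNorm h 2 μ = ENNReal.ofReal (Real.sqrt (∫ a, ‖h a‖ ^ 2 ∂μ)) := by
    intro h hh
    rw [hh.eLpNorm_eq_integral_rpow_norm two_ne_zero ENNReal.ofNat_ne_top]
    congr 1
    rw [Real.sqrt_eq_rpow]
    norm_num
  have tri := eLpNorm_add_le hfm hgm (by norm_num : (1:ℝ≥0∞) ≤ 2)
  rw [conv f hfL, conv g hgL, conv (f + g) hfgL] at tri
  have h2 := (ENNReal.toReal_le_toReal (by simp) (by simp)).2
    (tri.trans_eq (ENNReal.ofReal_add (Real.sqrt_nonneg _) (Real.sqrt_nonneg _)).symm)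
  rw [ENNReal.toReal_ofReal (Real.sqrt_nonneg _),
    ENNReal.toReal_ofReal (by positivity)] at h2
  calc Real.sqrt (∫ a, ∑ i, (u a i + v a i) ^ 2 ∂μ)
      = Real.sqrt (∫ a, ‖f a + g a‖ ^ 2 ∂μ) := by rw [hfgn]
    _ ≤ _ := by
        rw [← hfn, ← hgn]
        convert h2 using 4 <;> rfl

lemma map_compProd_comap {X Y Z : Type*} [MeasurableSpace X] [MeasurableSpace Y]
    [MeasurableSpace Z]
    (μ : Measure X) [IsProbabilityMeasure μ] (κ : Kernel Y Z) [IsMarkovKernel κ]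
    {h : X → Y} (hh : Measurable h) :
    (μ ⊗ₘ (κ.comap h hh)).map (fun p => (h p.1, p.2)) = (μ.map h) ⊗ₘ κ := by
  have hmap : Measurable (fun p : X × Z => (h p.1, p.2)) :=
    (hh.comp measurable_fst).prodMk measurable_snd
  haveI : IsProbabilityMeasure (μ.map h) := Measure.isProbabilityMeasure_map hh.aemeasurable
  haveI : IsProbabilityMeasure ((μ ⊗ₘ (κ.comap h hh)).map (fun p : X × Z => (h p.1, p.2))) :=
    Measure.isProbabilityMeasure_map hmap.aemeasurable
  refine MeasureTheory.ext_of_generate_finite _ generateFrom_prod.symm isPiSystem_prod ?_ ?_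
  · rintro s ⟨s₁, hs₁, s₂, hs₂, rfl⟩
    simp only [Set.mem_setOf_eq] at hs₁ hs₂
    rw [Measure.map_apply hmap (hs₁.prod hs₂)]
    have hpre : (fun p : X × Z => (h p.1, p.2)) ⁻¹' (s₁ ×ˢ s₂) = (h ⁻¹' s₁) ×ˢ s₂ := by
      ext p; simp [Set.mem_prod]
    rw [hpre, Measure.compProd_apply_prod (hh hs₁) hs₂,
      Measure.compProd_apply_prod hs₁ hs₂,
      setLIntegral_map hs₁ (κ.measurable_coe hs₂) hh]
    exact setLIntegral_congr_fun (hh hs₁)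
      (fun x _ => by rw [Kernel.comap_apply])
  · simp

/-- The triangle inequality for `W2`. -/
lemma W2_triangle (ρ₁ ρ₂ ρ₃ : Measure (V k))
    [IsProbabilityMeasure ρ₁] [IsProbabilityMeasure ρ₂] [IsProbabilityMeasure ρ₃]
    (h1 : Integrable (fun x : V k => ∑ i, (x i) ^ 2) ρ₁)
    (h2 : Integrable (fun x : V k => ∑ i, (x i) ^ 2) ρ₂)
    (h3 : Integrable (fun x : V k => ∑ i, (x i) ^ 2) ρ₃) :
    W2 ρ₁ ρ₃ ≤ W2 ρ₁ ρ₂ + W2 ρ₂ ρ₃ := by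
  refine le_of_forall_pos_le_add fun ε hε => ?_
  have hδ : (0:ℝ) < (ε / 2) ^ 2 := by positivity
  obtain ⟨π₁, hπ₁f, hπ₁s, hπ₁c⟩ := exists_coupling ρ₁ ρ₂ hδ
  obtain ⟨π₂, hπ₂f, hπ₂s, hπ₂c⟩ := exists_coupling ρ₂ ρ₃ hδ
  haveI : IsProbabilityMeasure π₁ := isProbabilityMeasure_of_coupling hπ₁f
  haveI : IsProbabilityMeasure π₂ := isProbabilityMeasure_of_coupling hπ₂f
  set κ := π₂.condKernel with hκ
  set PP : Measure ((V k × V k) × V k) := π₁ ⊗ₘ (κ.comap Prod.snd measurable_snd) with hPP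
  have hm12 : PP.map Prod.fst = π₁ := Measure.fst_compProd π₁ _
  have hm23 : PP.map (fun p => (p.1.2, p.2)) = π₂ := by
    have h := map_compProd_comap π₁ κ (measurable_snd : Measurable (Prod.snd : V k × V k → V k))
    rw [hπ₁s] at h
    rw [hPP, h]
    have hfst : π₂.fst = ρ₂ := hπ₂f
    rw [← hfst]
    exact π₂.disintegrate _
  set g : (V k × V k) × V k → V k × V k := fun p => (p.1.1, p.2) with hg
  have hgm : Measurable g := (measurable_fst.fst).prodMk measurable_snd
  have hθ1 : (PP.map g).map Prod.fst = ρ₁ := by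
    rw [Measure.map_map measurable_fst hgm]
    have : (Prod.fst ∘ g) = (Prod.fst ∘ (Prod.fst : (V k × V k) × V k → V k × V k)) := rfl
    rw [this, ← Measure.map_map measurable_fst measurable_fst, hm12, hπ₁f]
  have hθ2 : (PP.map g).map Prod.snd = ρ₃ := by
    rw [Measure.map_map measurable_snd hgm]
    have : (Prod.snd ∘ g) = (Prod.snd ∘ (fun p : (V k × V k) × V k => (p.1.2, p.2))) := rfl
    rw [this, ← Measure.map_map measurable_snd (measurable_fst.snd.prodMk measurable_snd),
      hm23, hπ₂s]
  have step1 : W2 ρ₁ ρ₃ ≤ Real.sqrt (∫ p, cost p ∂(PP.map g)) := W2_le_sqrt_integral hθ1 hθ2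
  have hint1 : Integrable cost π₁ := integrable_cost hπ₁f hπ₁s h1 h2
  have hint2 : Integrable cost π₂ := integrable_cost hπ₂f hπ₂s h2 h3
  -- rewrite the integral
  have hcost_eq : ∫ p, cost p ∂(PP.map g)
      = ∫ p, ∑ i, ((p.1.1 - p.1.2 : V k) i + (p.1.2 - p.2 : V k) i) ^ 2 ∂PP := by
    rw [integral_map hgm.aemeasurable cost_continuous.aestronglyMeasurable]
    refine integral_congr_ae (Filter.Eventually.of_forall fun p => ?_)
    unfold cost
    refine Finset.sum_congr rfl fun i _ => by simp [hg, Pi.sub_apply]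
  set u : (V k × V k) × V k → V k := fun p => p.1.1 - p.1.2 with hu
  set v : (V k × V k) × V k → V k := fun p => p.1.2 - p.2 with hv
  have hum : Measurable u := measurable_fst.fst.sub measurable_fst.snd
  have hvm : Measurable v := measurable_fst.snd.sub measurable_snd
  have hu2 : Integrable (fun p => ∑ i, (u p i) ^ 2) PP := by
    have heq : (fun p : (V k × V k) × V k => ∑ i, (u p i) ^ 2)
        = fun p => cost p.1 := by
      funext p; unfold cost; exact Finset.sum_congr rfl fun i _ => by simp [hu, Pi.sub_apply]
    rw [heq]
    exact integrable_cost_proj measurable_fst hm12 hint1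
  have hv2 : Integrable (fun p => ∑ i, (v p i) ^ 2) PP := by
    have heq : (fun p : (V k × V k) × V k => ∑ i, (v p i) ^ 2)
        = fun p => cost (p.1.2, p.2) := by
      funext p; unfold cost; exact Finset.sum_congr rfl fun i _ => by simp [hv, Pi.sub_apply]
    rw [heq]
    exact integrable_cost_proj (measurable_fst.snd.prodMk measurable_snd) hm23 hint2
  have hmink := minkowski PP u v hum hvm hu2 hv2
  have hu_int : ∫ p, ∑ i, (u p i) ^ 2 ∂PP = ∫ p, cost p ∂π₁ := by
    rw [← hm12, integral_map measurable_fst.aemeasurable cost_continuous.aestronglyMeasurable]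
    refine integral_congr_ae (Filter.Eventually.of_forall fun p => ?_)
    unfold cost; exact Finset.sum_congr rfl fun i _ => by simp [hu, Pi.sub_apply]
  have hv_int : ∫ p, ∑ i, (v p i) ^ 2 ∂PP = ∫ p, cost p ∂π₂ := by
    rw [← hm23, integral_map (measurable_fst.snd.prodMk measurable_snd).aemeasurable
      cost_continuous.aestronglyMeasurable]
    refine integral_congr_ae (Filter.Eventually.of_forall fun p => ?_)
    unfold cost; exact Finset.sum_congr rfl fun i _ => by simp [hv, Pi.sub_apply]
  have bound1 : Real.sqrt (∫ p, cost p ∂π₁) ≤ W2 ρ₁ ρ₂ + ε / 2 := by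
    calc Real.sqrt (∫ p, cost p ∂π₁) ≤ Real.sqrt (W2 ρ₁ ρ₂ ^ 2 + (ε / 2) ^ 2) :=
          Real.sqrt_le_sqrt hπ₁c.le
      _ ≤ Real.sqrt (W2 ρ₁ ρ₂ ^ 2) + Real.sqrt ((ε / 2) ^ 2) :=
          sqrt_add_le (sq_nonneg _) (sq_nonneg _)
      _ = W2 ρ₁ ρ₂ + ε / 2 := by
          rw [Real.sqrt_sq (W2_nonneg ρ₁ ρ₂), Real.sqrt_sq (by positivity)]
  have bound2 : Real.sqrt (∫ p, cost p ∂π₂) ≤ W2 ρ₂ ρ₃ + ε / 2 := by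
    calc Real.sqrt (∫ p, cost p ∂π₂) ≤ Real.sqrt (W2 ρ₂ ρ₃ ^ 2 + (ε / 2) ^ 2) :=
          Real.sqrt_le_sqrt hπ₂c.le
      _ ≤ Real.sqrt (W2 ρ₂ ρ₃ ^ 2) + Real.sqrt ((ε / 2) ^ 2) :=
          sqrt_add_le (sq_nonneg _) (sq_nonneg _)
      _ = W2 ρ₂ ρ₃ + ε / 2 := by
          rw [Real.sqrt_sq (W2_nonneg ρ₂ ρ₃), Real.sqrt_sq (by positivity)]
  calc W2 ρ₁ ρ₃ ≤ Real.sqrt (∫ p, cost p ∂(PP.map g)) := step1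
    _ = Real.sqrt (∫ p, ∑ i, (u p i + v p i) ^ 2 ∂PP) := by
        rw [hcost_eq]
    _ ≤ Real.sqrt (∫ p, ∑ i, (u p i) ^ 2 ∂PP) + Real.sqrt (∫ p, ∑ i, (v p i) ^ 2 ∂PP) := hmink
    _ ≤ (W2 ρ₁ ρ₂ + ε / 2) + (W2 ρ₂ ρ₃ + ε / 2) := by
        rw [hu_int, hv_int]; exact add_le_add bound1 bound2
    _ = W2 ρ₁ ρ₂ + W2 ρ₂ ρ₃ + ε := by ring

lemma cost_swap (p : V k × V k) : cost (Prod.swap p) = cost p := by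
  unfold cost
  exact Finset.sum_congr rfl fun i _ => by simp [Prod.swap]; ring

lemma CSet_subset_swap (ρ σ : Measure (V k)) : CSet ρ σ ⊆ CSet σ ρ := by
  rintro v ⟨π, h1, h2, rfl⟩
  refine ⟨π.map Prod.swap, ?_, ?_, ?_⟩
  · rw [Measure.map_map measurable_fst measurable_swap]
    exact h2
  · rw [Measure.map_map measurable_snd measurable_swap]
    exact h1
  · rw [integral_map measurable_swap.aemeasurable cost_continuous.aestronglyMeasurable]
    exact integral_congr_ae (Filter.Eventually.of_forall fun p => (cost_swap p).symm)

lemma W2_symm (ρ σ : Measure (V k)) : W2 ρ σ = W2 σ ρ := by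
  rw [W2_eq, W2_eq,
    Set.Subset.antisymm (CSet_subset_swap ρ σ) (CSet_subset_swap σ ρ)]

-- pointwise Cauchy-Schwarz for matrices
lemma sq_mulVec_le {n d : ℕ} (M : Matrix (Fin n) (Fin d) ℝ) (x : V n) :
    ∑ j, (Mᵀ.mulVec x j) ^ 2 ≤ (∑ i, ∑ j, (M i j) ^ 2) * ∑ i, (x i) ^ 2 := by
  have h : ∀ j, (Mᵀ.mulVec x j) ^ 2 ≤ (∑ i, (M i j) ^ 2) * ∑ i, (x i) ^ 2 := by
    intro j
    have := Finset.sum_mul_sq_le_sq_mul_sq Finset.univ (fun i => M i j) x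
    simpa [Matrix.mulVec, dotProduct, Matrix.transpose_apply] using this
  calc ∑ j, (Mᵀ.mulVec x j) ^ 2 ≤ ∑ j, (∑ i, (M i j) ^ 2) * ∑ i, (x i) ^ 2 :=
        Finset.sum_le_sum fun j _ => h j
    _ = (∑ i, ∑ j, (M i j) ^ 2) * ∑ i, (x i) ^ 2 := by
        rw [← Finset.sum_mul, Finset.sum_comm]

-- pointwise contraction
lemma contract_pt {n d : ℕ} (B : Matrix (Fin n) (Fin d) ℝ) (hB : Bᵀ * B = 1) (u : V n) :
    ∑ j, (Bᵀ.mulVec u j) ^ 2 ≤ ∑ i, (u i) ^ 2 := by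
  set P := B * Bᵀ with hPdef
  have hPP : P * P = P := by
    rw [hPdef, Matrix.mul_assoc, ← Matrix.mul_assoc Bᵀ B Bᵀ, hB, Matrix.one_mul]
  have hPt : Pᵀ = P := by rw [hPdef, Matrix.transpose_mul, Matrix.transpose_transpose]
  have key1 : (Bᵀ.mulVec u) ⬝ᵥ (Bᵀ.mulVec u) = u ⬝ᵥ P.mulVec u := by
    rw [Matrix.dotProduct_mulVec, ← Matrix.mulVec_transpose, Matrix.transpose_transpose,
      Matrix.mulVec_mulVec, ← hPdef, dotProduct_comm]
  have key2 : (P.mulVec u) ⬝ᵥ (P.mulVec u) = u ⬝ᵥ P.mulVec u := by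
    rw [Matrix.dotProduct_mulVec, ← Matrix.mulVec_transpose, hPt, Matrix.mulVec_mulVec, hPP, dotProduct_comm]
  have key3 : (P.mulVec u) ⬝ᵥ u = u ⬝ᵥ P.mulVec u := dotProduct_comm _ _
  have hv : 0 ≤ (u - P.mulVec u) ⬝ᵥ (u - P.mulVec u) :=
    Finset.sum_nonneg fun i _ => mul_self_nonneg _
  have expand : (u - P.mulVec u) ⬝ᵥ (u - P.mulVec u)
      = u ⬝ᵥ u - u ⬝ᵥ P.mulVec u := by
    rw [sub_dotProduct, dotProduct_sub, dotProduct_sub, key2, key3]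
    ring
  have h1 : ∑ j, (Bᵀ.mulVec u j) ^ 2 = (Bᵀ.mulVec u) ⬝ᵥ (Bᵀ.mulVec u) := by
    simp [dotProduct, pow_two]
  have h2 : ∑ i, (u i) ^ 2 = u ⬝ᵥ u := by simp [dotProduct, pow_two]
  rw [h1, h2, key1]
  linarith [expand ▸ hv]

lemma measurable_mulVec {a b : ℕ} (M : Matrix (Fin a) (Fin b) ℝ) :
    Measurable (M.mulVec : V b → V a) := by
  apply measurable_pi_lambda
  intro j
  simp only [Matrix.mulVec, dotProduct]
  exact Finset.measurable_sum _ fun i _ => (measurable_pi_apply i).const_mul _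


section Matrices

variable {n d : ℕ}

/-- second moment of a pushforward by a (transposed) matrix -/
lemma secondMom_map (B : Matrix (Fin n) (Fin d) ℝ) {μ : Measure (V n)}
    (hμ2 : Integrable (fun x : V n => ∑ i, (x i) ^ 2) μ) :
    Integrable (fun z : V d => ∑ j, (z j) ^ 2) (μ.map Bᵀ.mulVec) := by
  rw [integrable_map_measure (by apply Measurable.aestronglyMeasurable; fun_prop)
    (measurable_mulVec _).aemeasurable]
  refine Integrable.mono' (hμ2.const_mul (∑ i, ∑ j, (B i j) ^ 2))
    (by apply Measurable.aestronglyMeasurable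
        exact Finset.measurable_sum _ fun j _ =>
          (((measurable_mulVec Bᵀ).comp measurable_id).eval).pow_const 2)
    (Filter.Eventually.of_forall fun x => ?_)
  simp only [Function.comp_apply]
  rw [Real.norm_of_nonneg (Finset.sum_nonneg fun _ _ => sq_nonneg _)]
  exact sq_mulVec_le B x

lemma W2_map_pair (B C : Matrix (Fin n) (Fin d) ℝ) (μ : Measure (V n))
    [IsProbabilityMeasure μ] (hμ2 : Integrable (fun x : V n => ∑ i, (x i) ^ 2) μ) :
    W2 (μ.map Bᵀ.mulVec) (μ.map Cᵀ.mulVec)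
      ≤ Real.sqrt (∫ x, ∑ i, (x i) ^ 2 ∂μ) * frobNorm (B - C) := by
  set T : V n → V d × V d := fun x => (Bᵀ.mulVec x, Cᵀ.mulVec x) with hT
  have hTm : Measurable T := (measurable_mulVec Bᵀ).prodMk (measurable_mulVec Cᵀ)
  have h1 : (μ.map T).map Prod.fst = μ.map Bᵀ.mulVec := by
    rw [Measure.map_map measurable_fst hTm]; rfl
  have h2 : (μ.map T).map Prod.snd = μ.map Cᵀ.mulVec := by
    rw [Measure.map_map measurable_snd hTm]; rfl
  refine (W2_le_sqrt_integral h1 h2).trans ?_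
  set S : ℝ := ∑ i, ∑ j, ((B - C) i j) ^ 2 with hS
  have hS0 : 0 ≤ S := Finset.sum_nonneg fun _ _ => Finset.sum_nonneg fun _ _ => sq_nonneg _
  have hcost : ∀ x : V n, cost (T x) = ∑ j, ((B - C)ᵀ.mulVec x j) ^ 2 := by
    intro x
    unfold cost
    refine Finset.sum_congr rfl fun j _ => ?_
    rw [Matrix.transpose_sub, Matrix.sub_mulVec]
    simp [hT]
  have hint : ∫ p, cost p ∂(μ.map T) = ∫ x, cost (T x) ∂μ :=
    integral_map hTm.aemeasurable cost_continuous.aestronglyMeasurable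
  have hintle : ∫ x, cost (T x) ∂μ ≤ S * ∫ x, ∑ i, (x i) ^ 2 ∂μ := by
    rw [← integral_const_mul]
    refine integral_mono ?_ (hμ2.const_mul S) ?_
    · refine Integrable.mono' (hμ2.const_mul S)
        ((cost_continuous.measurable.comp hTm).aestronglyMeasurable)
        (Filter.Eventually.of_forall fun x => ?_)
      · rw [Real.norm_of_nonneg (cost_nonneg _), hcost x]
        exact sq_mulVec_le (B - C) x
    · intro x
      simp only []
      rw [hcost x]
      exact sq_mulVec_le (B - C) x
  calc Real.sqrt (∫ p, cost p ∂(μ.map T)) ≤ Real.sqrt (S * ∫ x, ∑ i, (x i) ^ 2 ∂μ) := by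
        rw [hint]; exact Real.sqrt_le_sqrt hintle
    _ = Real.sqrt (∫ x, ∑ i, (x i) ^ 2 ∂μ) * frobNorm (B - C) := by
        rw [Real.sqrt_mul hS0, mul_comm]
        rfl

end Matrices



section Contract

variable {n d : ℕ}

lemma W2_contract (B : Matrix (Fin n) (Fin d) ℝ) (hB : Bᵀ * B = 1)
    (μ μ' : Measure (V n)) [IsProbabilityMeasure μ] [IsProbabilityMeasure μ']
    (hμ2 : Integrable (fun x : V n => ∑ i, (x i) ^ 2) μ)
    (hμ'2 : Integrable (fun x : V n => ∑ i, (x i) ^ 2) μ') :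
    W2 (μ.map Bᵀ.mulVec) (μ'.map Bᵀ.mulVec) ≤ W2 μ μ' := by
  refine le_of_forall_pos_le_add fun ε hε => ?_
  obtain ⟨γ, hγf, hγs, hγc⟩ := exists_coupling μ μ' (show (0:ℝ) < ε ^ 2 by positivity)
  haveI : IsProbabilityMeasure γ := isProbabilityMeasure_of_coupling hγf
  set T : V n × V n → V d × V d := Prod.map Bᵀ.mulVec Bᵀ.mulVec with hT
  have hTm : Measurable T := (measurable_mulVec Bᵀ).prodMap (measurable_mulVec Bᵀ)
  have h1 : (γ.map T).map Prod.fst = μ.map Bᵀ.mulVec := by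
    rw [Measure.map_map measurable_fst hTm]
    have h : Prod.fst ∘ T = Bᵀ.mulVec ∘ Prod.fst := rfl
    rw [h, ← Measure.map_map (measurable_mulVec Bᵀ) measurable_fst, hγf]
  have h2 : (γ.map T).map Prod.snd = μ'.map Bᵀ.mulVec := by
    rw [Measure.map_map measurable_snd hTm]
    have h : Prod.snd ∘ T = Bᵀ.mulVec ∘ Prod.snd := rfl
    rw [h, ← Measure.map_map (measurable_mulVec Bᵀ) measurable_snd, hγs]
  have hcost : ∀ p : V n × V n, cost (T p) ≤ cost p := by
    intro p
    have heq : cost (T p) = ∑ j, (Bᵀ.mulVec (p.1 - p.2) j) ^ 2 := by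
      unfold cost
      refine Finset.sum_congr rfl fun j _ => ?_
      rw [Matrix.mulVec_sub]
      rfl
    have heq2 : cost p = ∑ i, ((p.1 - p.2 : V n) i) ^ 2 := by
      unfold cost
      exact Finset.sum_congr rfl fun i _ => by rw [Pi.sub_apply]
    rw [heq, heq2]
    exact contract_pt B hB _
  have hintc : Integrable cost γ := integrable_cost hγf hγs hμ2 hμ'2
  have hmap : ∫ p, cost p ∂(γ.map T) = ∫ p, cost (T p) ∂γ :=
    integral_map hTm.aemeasurable cost_continuous.aestronglyMeasurable
  have hintT : Integrable (fun p => cost (T p)) γ := by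
    refine Integrable.mono' hintc
      ((cost_continuous.measurable.comp hTm).aestronglyMeasurable)
      (Filter.Eventually.of_forall fun p => ?_)
    rw [Real.norm_of_nonneg (cost_nonneg _)]
    exact hcost p
  calc W2 (μ.map Bᵀ.mulVec) (μ'.map Bᵀ.mulVec)
      ≤ Real.sqrt (∫ p, cost p ∂(γ.map T)) := W2_le_sqrt_integral h1 h2
    _ ≤ Real.sqrt (∫ p, cost p ∂γ) := by
        rw [hmap]
        exact Real.sqrt_le_sqrt (integral_mono hintT hintc hcost)
    _ ≤ Real.sqrt (W2 μ μ' ^ 2 + ε ^ 2) := Real.sqrt_le_sqrt hγc.le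
    _ ≤ Real.sqrt (W2 μ μ' ^ 2) + Real.sqrt (ε ^ 2) := sqrt_add_le (sq_nonneg _) (sq_nonneg _)
    _ = W2 μ μ' + ε := by rw [Real.sqrt_sq (W2_nonneg μ μ'), Real.sqrt_sq hε.le]

end Contract

end W2Aux

open W2Aux

/-- Lipschitz stability in the Euclidean case:
`|W₂(Aᵀ_#μ, ν) − W₂((A')ᵀ_#μ', ν')| ≤ c₀‖A − A'‖ + W₂(μ,μ') + W₂(ν,ν')`
with `c₀ = (∫ ‖x‖² dμ)^{1/2}`. -/
theorem lipschitz_stability_euclidean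
    {n d : ℕ} (hd : 1 ≤ d) (hnd : d ≤ n)
    (μ μ' : Measure (Fin n → ℝ)) [IsProbabilityMeasure μ] [IsProbabilityMeasure μ']
    (ν ν' : Measure (Fin d → ℝ)) [IsProbabilityMeasure ν] [IsProbabilityMeasure ν']
    (hμ2 : Integrable (fun x => ∑ i, (x i) ^ 2) μ)
    (hμ'2 : Integrable (fun x => ∑ i, (x i) ^ 2) μ')
    (hν2 : Integrable (fun z => ∑ j, (z j) ^ 2) ν)
    (hν'2 : Integrable (fun z => ∑ j, (z j) ^ 2) ν')
    (A A' : Matrix (Fin n) (Fin d) ℝ)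
    (hA : Aᵀ * A = 1) (hA' : A'ᵀ * A' = 1) :
    |W2 (μ.map Aᵀ.mulVec) ν - W2 (μ'.map A'ᵀ.mulVec) ν'|
      ≤ Real.sqrt (∫ x, ∑ i, (x i) ^ 2 ∂μ) * frobNorm (A - A')
        + W2 μ μ' + W2 ν ν' := by
  haveI i1 : IsProbabilityMeasure (μ.map Aᵀ.mulVec) :=
    Measure.isProbabilityMeasure_map (measurable_mulVec Aᵀ).aemeasurable
  haveI i2 : IsProbabilityMeasure (μ.map A'ᵀ.mulVec) :=
    Measure.isProbabilityMeasure_map (measurable_mulVec A'ᵀ).aemeasurable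
  haveI i3 : IsProbabilityMeasure (μ'.map A'ᵀ.mulVec) :=
    Measure.isProbabilityMeasure_map (measurable_mulVec A'ᵀ).aemeasurable
  have m1 := secondMom_map A hμ2
  have m2 := secondMom_map A' hμ2
  have m3 := secondMom_map A' hμ'2
  set c₀ : ℝ := Real.sqrt (∫ x, ∑ i, (x i) ^ 2 ∂μ) with hc₀
  set F : ℝ := frobNorm (A - A') with hF
  have e1 : W2 (μ.map Aᵀ.mulVec) (μ.map A'ᵀ.mulVec) ≤ c₀ * F := W2_map_pair A A' μ hμ2
  have e2 : W2 (μ.map A'ᵀ.mulVec) (μ'.map A'ᵀ.mulVec) ≤ W2 μ μ' :=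
    W2_contract A' hA' μ μ' hμ2 hμ'2
  -- direction 1
  have t1 : W2 (μ.map Aᵀ.mulVec) ν
      ≤ W2 (μ.map Aᵀ.mulVec) (μ.map A'ᵀ.mulVec) + W2 (μ.map A'ᵀ.mulVec) ν :=
    W2_triangle _ _ _ m1 m2 hν2
  have t2 : W2 (μ.map A'ᵀ.mulVec) ν
      ≤ W2 (μ.map A'ᵀ.mulVec) (μ'.map A'ᵀ.mulVec) + W2 (μ'.map A'ᵀ.mulVec) ν :=
    W2_triangle _ _ _ m2 m3 hν2
  have t3 : W2 (μ'.map A'ᵀ.mulVec) ν ≤ W2 (μ'.map A'ᵀ.mulVec) ν' + W2 ν' ν :=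
    W2_triangle _ _ _ m3 hν'2 hν2
  have e3 : W2 ν' ν = W2 ν ν' := W2_symm ν' ν
  -- direction 2
  have t1' : W2 (μ'.map A'ᵀ.mulVec) ν'
      ≤ W2 (μ'.map A'ᵀ.mulVec) (μ.map A'ᵀ.mulVec) + W2 (μ.map A'ᵀ.mulVec) ν' :=
    W2_triangle _ _ _ m3 m2 hν'2
  have t2' : W2 (μ.map A'ᵀ.mulVec) ν'
      ≤ W2 (μ.map A'ᵀ.mulVec) (μ.map Aᵀ.mulVec) + W2 (μ.map Aᵀ.mulVec) ν' :=
    W2_triangle _ _ _ m2 m1 hν'2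
  have t3' : W2 (μ.map Aᵀ.mulVec) ν' ≤ W2 (μ.map Aᵀ.mulVec) ν + W2 ν ν' :=
    W2_triangle _ _ _ m1 hν2 hν'2
  have e1' : W2 (μ.map A'ᵀ.mulVec) (μ.map Aᵀ.mulVec)
      = W2 (μ.map Aᵀ.mulVec) (μ.map A'ᵀ.mulVec) := W2_symm _ _
  have e2' : W2 (μ'.map A'ᵀ.mulVec) (μ.map A'ᵀ.mulVec)
      = W2 (μ.map A'ᵀ.mulVec) (μ'.map A'ᵀ.mulVec) := W2_symm _ _
  rw [abs_sub_le_iff]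
  constructor
  · linarith
  · linarith
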